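/- Let χ be a character on X, T₂ an X-tree, A ≠ B two states of χ with taxon sets X_A = χ⁻¹(A) and X_B = χ⁻¹(B). Suppose T₂ has an edge e generating a split P|Q of X with X_A ⊆ P and X_B ⊆ Q. If χ' is obtained from χ by relabeling A := B, then ℓ(T₂,χ') ≥ ℓ(T₂,χ) − 1. -/

import Mathlib

open SimpleGraph

namespace PhyloMP

/-- The set of mutation edges of a vertex coloring `ω` of a graph:
edges whose two endpoints receive different states. -/
def mutationEdges {V C : Type} (g : SimpleGraph V) (ω : V → C) : Set (Sym2 V) :=
  {e | e ∈ g.edgeSet ∧ ∃ u v : V, e = s(u, v) ∧ ω u ≠ ω v}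

/-- An unrooted binary phylogenetic tree on taxon set `X`, with vertex set `V`:
a tree whose degree-1 vertices (leaves) are bijectively labeled by `X` and whose
other vertices have degree 3. -/
structure XTree (X V : Type) [Fintype V] where
  g : SimpleGraph V
  isTree : g.IsTree
  leaf : X → V
  leafInj : Function.Injective leaf
  leafDeg : ∀ x, (g.neighborSet (leaf x)).ncard = 1
  leavesOnly : ∀ v, (g.neighborSet v).ncard = 1 → ∃ x, leaf x = v
  internalDeg : ∀ v, (g.neighborSet v).ncard ≠ 1 → (g.neighborSet v).ncard = 3

variable {X V C : Type} [Fintype V]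

/-- `ω` extends the character `χ` to all vertices of `T`. -/
def IsExtension (T : XTree X V) (χ : X → C) (ω : V → C) : Prop :=
  ∀ x, ω (T.leaf x) = χ x

/-- The parsimony score `ℓ(T,χ)`: the minimum number of mutation edges over
all extensions of `χ` to `T`. -/
noncomputable def score (T : XTree X V) (χ : X → C) : ℕ :=
  sInf {n | ∃ ω : V → C, IsExtension T χ ω ∧ (mutationEdges T.g ω).ncard = n}

/-- A most parsimonious extension. -/
def IsMPExtension (T : XTree X V) (χ : X → C) (ω : V → C) : Prop :=
  IsExtension T χ ω ∧ (mutationEdges T.g ω).ncard = score T χ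

/-- `|χ|`: the number of states used by the character `χ`. -/
noncomputable def nStates {X C : Type} (χ : X → C) : ℕ := (Set.range χ).ncard

/-- `χ` is convex on `T`: its parsimony score equals its number of states minus one. -/
def IsConvex (T : XTree X V) (χ : X → C) : Prop := score T χ = nStates χ - 1

/-- The maximum parsimony distance between two `X`-trees. -/
noncomputable def dMP {V₁ V₂ : Type} [Fintype V₁] [Fintype V₂]
    (T₁ : XTree X V₁) (T₂ : XTree X V₂) : ℕ :=
  sSup {d | ∃ χ : X → ℕ, Nat.dist (score T₁ χ) (score T₂ χ) = d}

/-- A character achieving the maximum parsimony distance. -/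
def IsOptimal {V₁ V₂ : Type} [Fintype V₁] [Fintype V₂]
    (T₁ : XTree X V₁) (T₂ : XTree X V₂) (χ : X → C) : Prop :=
  Nat.dist (score T₁ χ) (score T₂ χ) = dMP T₁ T₂

/-- The forest induced by an extension `ω`: delete all mutation edges of `ω` from `T`. -/
noncomputable def forest (T : XTree X V) (ω : V → C) : SimpleGraph V :=
  T.g.deleteEdges (mutationEdges T.g ω)

/-- A connected component `c` of the forest `F` carries the state `s`. -/
def carries {V C : Type} (F : SimpleGraph V) (ω : V → C) (c : F.ConnectedComponent) (s : C) : Prop :=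
  ∃ v, F.connectedComponentMk v = c ∧ ω v = s

/-- The number of components of `F` carrying the state `s`. A state is *unique*
if this is 1 and *repeating* if this is at least 2. -/
noncomputable def stateMultiplicity {V C : Type} (F : SimpleGraph V) (ω : V → C) (s : C) : ℕ :=
  {c : F.ConnectedComponent | carries F ω c s}.ncard

/-- Relabel the state `A` as `B` in the character `χ`. -/
def relabel {X C : Type} [DecidableEq C] (χ : X → C) (A B : C) : X → C :=
  fun x => if χ x = A then B else χ x

/-- Two states `A`, `B` are adjacent (with respect to the coloring `ω`) if some edge of the
graph joins a vertex colored `A` to a vertex colored `B`; for distinct states, this edge is a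
mutation edge joining the corresponding components of the induced forest. -/
def statesAdjacent {V C : Type} (g : SimpleGraph V) (ω : V → C) (A B : C) : Prop :=
  ∃ u v, g.Adj u v ∧ ω u = A ∧ ω v = B

end PhyloMP

open PhyloMP in
/-- If an edge `{u,v}` of `T₂` generates a split `P|Q` with the `A`-taxa
in `P` and the `B`-taxa in `Q`, then relabeling `A := B` decreases the parsimony score
on `T₂` by at most one, i.e. `ℓ(T₂,χ') ≥ ℓ(T₂,χ) - 1`. -/
theorem stmt_10 {X V C : Type} [Fintype V] [DecidableEq C] (T₂ : XTree X V) (χ : X → C)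
    (A B : C) (hAB : A ≠ B) (u v : V) (huv : T₂.g.Adj u v)
    (hA : ∀ x, χ x = A → (T₂.g.deleteEdges {s(u, v)}).Reachable (T₂.leaf x) u)
    (hB : ∀ x, χ x = B → (T₂.g.deleteEdges {s(u, v)}).Reachable (T₂.leaf x) v) :
    score T₂ χ ≤ score T₂ (relabel χ A B) + 1 := by
  classical
  set χ' := relabel χ A B with hχ'
  by_cases hne : {n | ∃ ω : V → C, IsExtension T₂ χ' ω ∧ (mutationEdges T₂.g ω).ncard = n}.Nonempty
  · obtain ⟨ω', hext', hcard⟩ := Nat.sInf_mem hne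
    set G := T₂.g.deleteEdges {s(u, v)} with hG
    have hbridge : ¬ G.Reachable u v := by
      have hb : T₂.g.IsBridge s(u, v) :=
        (isAcyclic_iff_forall_adj_isBridge.mp T₂.isTree.IsAcyclic) huv
      rw [isBridge_iff] at hb
      exact hb
    set side : V → Prop := fun w => G.Reachable w u with hside
    set ω : V → C := fun w => if side w ∧ ω' w = B then A else ω' w with hω
    have hext : IsExtension T₂ χ ω := by
      intro x
      by_cases hx : χ x = A
      · have h1 : side (T₂.leaf x) := hA x hx
        have h2 : ω' (T₂.leaf x) = B := by
          rw [hext' x, hχ', relabel, hx, if_pos rfl]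
        simp only [hω]
        rw [if_pos (⟨h1, h2⟩ : side (T₂.leaf x) ∧ ω' (T₂.leaf x) = B), hx]
      · by_cases hx2 : χ x = B
        · have h1 : ¬ side (T₂.leaf x) := by
            intro h
            exact hbridge (h.symm.trans (hB x hx2))
          simp only [hω]
          rw [if_neg (by tauto), hext' x, hχ', relabel, if_neg hx, hx2]
        · have h2 : ω' (T₂.leaf x) = χ x := by
            rw [hext' x, hχ', relabel, if_neg hx]
          simp only [hω]
          rw [if_neg (by rw [h2]; tauto), h2]
    have hsub : mutationEdges T₂.g ω ⊆ mutationEdges T₂.g ω' ∪ {s(u, v)} := by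
      rintro e ⟨he, a, b, rfl, hab⟩
      by_cases heq : s(a, b) = s(u, v)
      · right; exact heq
      · left
        refine ⟨he, a, b, rfl, ?_⟩
        have hGab : G.Adj a b := by
          rw [hG, SimpleGraph.deleteEdges_adj]
          refine ⟨?_, by simpa using heq⟩
          rwa [SimpleGraph.mem_edgeSet] at he
        have hsame : side a ↔ side b :=
          ⟨fun h => hGab.symm.reachable.trans h, fun h => hGab.reachable.trans h⟩
        intro hcontra
        apply hab
        simp only [hω]
        by_cases hsa : side a
        · have hsb : side b := hsame.mp hsa
          by_cases hBa : ω' a = B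
          · rw [if_pos ⟨hsa, hBa⟩, if_pos ⟨hsb, hcontra ▸ hBa⟩]
          · rw [if_neg (by tauto), if_neg (by rw [← hcontra]; tauto), hcontra]
        · have hsb : ¬ side b := fun h => hsa (hsame.mpr h)
          rw [if_neg (by tauto), if_neg (by tauto), hcontra]
    have hfin : (mutationEdges T₂.g ω' ∪ {s(u, v)} : Set (Sym2 V)).Finite :=
      Set.toFinite _
    have h1 : (mutationEdges T₂.g ω).ncard ≤ (mutationEdges T₂.g ω' ∪ {s(u, v)}).ncard :=
      Set.ncard_le_ncard hsub hfin
    have h2 : (mutationEdges T₂.g ω' ∪ {s(u, v)}).ncard ≤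
        (mutationEdges T₂.g ω').ncard + ({s(u, v)} : Set (Sym2 V)).ncard :=
      Set.ncard_union_le _ _
    have h3 : ({s(u, v)} : Set (Sym2 V)).ncard = 1 := Set.ncard_singleton _
    have hle : score T₂ χ ≤ (mutationEdges T₂.g ω).ncard :=
      Nat.sInf_le ⟨ω, hext, rfl⟩
    have hscore' : (mutationEdges T₂.g ω').ncard = score T₂ χ' := hcard
    omega
  · have h0 : score T₂ χ = 0 := by
      rw [score]
      convert Nat.sInf_empty
      rw [Set.eq_empty_iff_forall_notMem]
      rintro n ⟨ω, hω, hc⟩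
      refine hne ⟨(mutationEdges T₂.g (fun w => if ω w = A then B else ω w)).ncard,
        fun w => if ω w = A then B else ω w, fun x => ?_, rfl⟩
      rw [hχ', relabel]
      simp [hω x]
    omega
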